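/- For every n ≥ 1 there exists a binary de Bruijn sequence of order n with discrepancy exactly n, and n is the minimum possible discrepancy over all binary de Bruijn sequences of order n. -/

import Mathlib

def cnt {N b : ℕ} (hN : 0 < N) (w : Fin N → Fin b) (a : Fin b) (p L : ℕ) : ℕ :=
  ((Finset.range L).filter (fun i => w ⟨(p + i) % N, Nat.mod_lt _ hN⟩ = a)).card

def isDeBruijn {b n : ℕ} (hN : 0 < b ^ n) (w : Fin (b ^ n) → Fin b) : Prop :=
  ∀ u : Fin n → Fin b, ∃! p : Fin (b ^ n),
    ∀ i : Fin n, w ⟨(p.val + i.val) % b ^ n, Nat.mod_lt _ hN⟩ = u i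

/-- Discrepancy of a cyclic binary string: the maximum over cyclic substrings of
the absolute difference between the numbers of ones and zeros. -/
def disc {N : ℕ} (hN : 0 < N) (w : Fin N → Fin 2) : ℕ :=
  Finset.sup (Finset.range N ×ˢ Finset.range (N + 1)) (fun q =>
    ((cnt hN w 1 q.1 q.2 : ℤ) - (cnt hN w 0 q.1 q.2 : ℤ)).natAbs)

namespace DBmin

variable {m : ℕ}

abbrev St (m : ℕ) := Fin (m+1) → Fin 2

/-- CCR shift: drop first bit, append complement of first bit. -/
def sf (a : St m) : St m :=
  fun i => if h : (i : ℕ) + 1 < m + 1 then a ⟨(i : ℕ)+1, h⟩ else a 0 + 1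

def flipAll (a : St m) : St m := fun i => a i + 1

def flip0 (a : St m) : St m := Function.update a 0 (a 0 + 1)

def ones (a : St m) : ℕ := ∑ i, (a i).val

lemma fin2_add_one_val : ∀ b : Fin 2, ((b + 1).val + b.val = 1) := by decide

lemma fin2_add_add (b : Fin 2) : b + 1 + 1 = b := by revert b; decide

lemma idx_congr (a : St m) {i j : ℕ} (hi : i < m + 1) (hj : j < m + 1) (h : i = j) :
    a ⟨i, hi⟩ = a ⟨j, hj⟩ := by subst h; rfl

lemma sf_apply_lt (a : St m) (i : ℕ) (h : i + 1 < m + 1) (h2 : i < m + 1) :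
    sf a ⟨i, h2⟩ = a ⟨i+1, h⟩ := by
  simp [sf, h]

lemma sf_apply_last (a : St m) (h2 : m < m + 1) :
    sf a ⟨m, h2⟩ = a 0 + 1 := by
  simp [sf]

/-- Main evaluation lemma for iterates of `sf`, valid for `k ≤ m+1`. -/
lemma sf_iter_apply :
    ∀ (k : ℕ) (_hk : k ≤ m + 1) (a : St m) (i : ℕ) (hi : i < m + 1),
      (sf^[k] a) ⟨i, hi⟩ =
        if h : i + k < m + 1 then a ⟨i + k, h⟩
        else a ⟨i + k - (m+1), by omega⟩ + 1 := by
  intro k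
  induction k with
  | zero =>
    intro _ a i hi
    rw [Function.iterate_zero_apply, dif_pos (show i + 0 < m + 1 by omega)]
    exact idx_congr a hi _ (by omega)
  | succ k ih =>
    intro hk a i hi
    rw [Function.iterate_succ_apply, ih (by omega) (sf a) i hi]
    by_cases h : i + k < m + 1
    · rw [dif_pos h]
      by_cases h2 : i + k + 1 < m + 1
      · rw [sf_apply_lt a (i+k) h2 h, dif_pos (show i + (k+1) < m + 1 by omega)]
        exact idx_congr a _ _ (by omega)
      · have him : (⟨i + k, h⟩ : Fin (m+1)) = ⟨m, by omega⟩ := by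
          have : i + k = m := by omega
          simp [this]
        rw [him, sf_apply_last, dif_neg (show ¬ i + (k+1) < m + 1 by omega)]
        have h0 : (0 : Fin (m+1)) = ⟨i + (k+1) - (m+1), by omega⟩ := by
          apply Fin.ext; simp; omega
        rw [h0]
    · rw [dif_neg h]
      have hlt : i + k - (m+1) + 1 < m + 1 := by omega
      rw [sf_apply_lt a (i + k - (m+1)) hlt, dif_neg (show ¬ i + (k+1) < m + 1 by omega)]
      congr 1
      exact idx_congr a _ _ (by omega)

lemma sf_iter_zero_apply (a : St m) (k : ℕ) (hk : k < m + 1) :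
    (sf^[k] a) 0 = a ⟨k, hk⟩ := by
  have h0 : (0 : Fin (m+1)) = ⟨0, by omega⟩ := rfl
  rw [h0, sf_iter_apply k (by omega) a 0 (by omega),
    dif_pos (show 0 + k < m + 1 by omega)]
  exact idx_congr a _ _ (by omega)

lemma sf_iter_halfperiod (a : St m) : sf^[m+1] a = flipAll a := by
  funext i
  rcases i with ⟨i, hi⟩
  rw [sf_iter_apply (m+1) (le_refl _) a i hi, dif_neg (by omega)]
  show _ = a ⟨i, hi⟩ + 1
  congr 1
  exact idx_congr a _ _ (by omega)

lemma flipAll_flipAll (a : St m) : flipAll (flipAll a) = a := by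
  funext i
  simp [flipAll, fin2_add_add]

lemma sf_iter_fullperiod (a : St m) : sf^[2*(m+1)] a = a := by
  have : 2*(m+1) = (m+1) + (m+1) := by ring
  rw [this, Function.iterate_add_apply, sf_iter_halfperiod,
    sf_iter_halfperiod, flipAll_flipAll]

lemma sf_iter_mod (a : St m) (k : ℕ) : sf^[k] a = sf^[k % (2*(m+1))] a := by
  conv_lhs => rw [← Nat.div_add_mod k (2*(m+1))]
  rw [Nat.add_comm, Function.iterate_add_apply]
  congr 1
  generalize k / (2*(m+1)) = q
  induction q with
  | zero => simp
  | succ q ih =>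
    rw [Nat.mul_succ, Function.iterate_add_apply, sf_iter_fullperiod, ih]

-- key step equation, additive form valid in ℕ for both cases
lemma ones_sf (a : St m) : ones (sf a) + 2 * (a 0).val = ones a + 1 := by
  have h1 : ones (sf a) = (∑ i : Fin m, (sf a i.castSucc).val) + (sf a (Fin.last m)).val :=
    Fin.sum_univ_castSucc _
  have h2 : ones a = (a 0).val + ∑ i : Fin m, (a i.succ).val := Fin.sum_univ_succ _
  have h3 : ∀ i : Fin m, sf a i.castSucc = a i.succ := by
    intro i
    simp only [sf]
    rw [dif_pos (show ((i.castSucc : Fin (m+1)) : ℕ) + 1 < m + 1 by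
      have := i.isLt; simp only [Fin.coe_castSucc]; omega)]
    congr 1
  have h4 : sf a (Fin.last m) = a 0 + 1 := by
    simp only [sf]
    rw [dif_neg (by simp [Fin.last])]
  rw [h1, h2, h4]
  simp only [h3]
  have := fin2_add_one_val (a 0)
  omega

lemma ones_flipAll (a : St m) : ones (flipAll a) + ones a = m + 1 := by
  unfold ones flipAll
  rw [← Finset.sum_add_distrib]
  have : ∀ i : Fin (m+1), (a i + 1).val + (a i).val = 1 := fun i => fin2_add_one_val (a i)
  simp only [this]
  simp

lemma ones_flip0 (a : St m) : ones (flip0 a) + 2 * (a 0).val = ones a + 1 := by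
  have h1 : ones (flip0 a)
      = (a 0 + 1).val + ∑ i ∈ Finset.univ \ {(0 : Fin (m+1))}, (a i).val := by
    unfold ones
    rw [Finset.sum_eq_add_sum_sdiff_singleton_of_mem (Finset.mem_univ 0)
      (fun i => ((flip0 a) i).val)]
    have hsum : ∑ i ∈ Finset.univ \ {(0 : Fin (m+1))}, ((flip0 a) i).val
        = ∑ i ∈ Finset.univ \ {(0 : Fin (m+1))}, (a i).val := by
      apply Finset.sum_congr rfl
      intro i hi
      have hne : i ≠ 0 := by
        simp only [Finset.mem_sdiff, Finset.mem_singleton] at hi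
        exact hi.2
      simp [flip0, Function.update_apply, hne]
    have h0 : (flip0 a) 0 = a 0 + 1 := by simp [flip0]
    rw [hsum, h0]
  have h2 : ones a = (a 0).val + ∑ i ∈ Finset.univ \ {(0 : Fin (m+1))}, (a i).val := by
    unfold ones
    exact Finset.sum_eq_add_sum_sdiff_singleton_of_mem (Finset.mem_univ 0) _
  have := fin2_add_one_val (a 0)
  omega

lemma ones_le (a : St m) : ones a ≤ m + 1 := by
  unfold ones
  calc ∑ i, (a i).val ≤ ∑ _i : Fin (m+1), 1 :=
        Finset.sum_le_sum (fun i _ => by omega)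
    _ = m + 1 := by simp

lemma ones_eq_top (a : St m) (h : ones a = m + 1) : a = fun _ => 1 := by
  by_contra hne
  have : ∃ i, a i ≠ 1 := by
    by_contra hc
    push_neg at hc
    exact hne (funext hc)
  obtain ⟨i, hi⟩ := this
  have hi0 : (a i).val = 0 := by omega
  have : ones a < m + 1 := by
    unfold ones
    calc ∑ j, (a j).val < ∑ _j : Fin (m+1), 1 := by
          apply Finset.sum_lt_sum (fun j _ => by omega)
          exact ⟨i, Finset.mem_univ i, by omega⟩
      _ = m + 1 := by simp
  omega

lemma ones_pos_exists (a : St m) (h : 0 < ones a) : ∃ i, a i = 1 := by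
  by_contra hc
  push_neg at hc
  have : ones a = 0 := by
    unfold ones
    apply Finset.sum_eq_zero
    intro i _
    have := hc i
    omega
  omega

def maxones (a : St m) : ℕ := (Finset.range (2*(m+1))).sup (fun k => ones (sf^[k] a))

lemma ones_iter_le_maxones' (a : St m) (k : ℕ) (hk : k < 2*(m+1)) :
    ones (sf^[k] a) ≤ maxones a :=
  Finset.le_sup (f := fun k => ones (sf^[k] a)) (Finset.mem_range.mpr hk)

lemma ones_le_maxones (a : St m) : ones a ≤ maxones a := by
  have := ones_iter_le_maxones' a 0 (by omega)
  simpa using this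

lemma maxones_le (a : St m) : maxones a ≤ m + 1 :=
  Finset.sup_le (fun k _ => ones_le _)

lemma exists_maxones (a : St m) : ∃ k < 2*(m+1), ones (sf^[k] a) = maxones a := by
  obtain ⟨k, hk, h⟩ := Finset.exists_mem_eq_sup (Finset.range (2*(m+1)))
    (by simp : (Finset.range (2*(m+1))).Nonempty) (fun k => ones (sf^[k] a))
  exact ⟨k, Finset.mem_range.mp hk, h.symm⟩


section S3
variable {m : ℕ}

lemma maxones_sf (a : St m) : maxones (sf a) = maxones a := by
  apply le_antisymm
  · apply Finset.sup_le
    intro k hk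
    rw [Finset.mem_range] at hk
    have : sf^[k] (sf a) = sf^[k+1] a := by
      rw [← Function.iterate_succ_apply]
    rw [this, sf_iter_mod a (k+1)]
    exact ones_iter_le_maxones' a _ (Nat.mod_lt _ (by omega))
  · apply Finset.sup_le
    intro k hk
    rw [Finset.mem_range] at hk
    have h1 : sf^[k + (2*(m+1)) - 1] (sf a) = sf^[k + 2*(m+1)] a := by
      rw [← Function.iterate_succ_apply]
      have he : (k + 2*(m+1) - 1).succ = k + 2*(m+1) := by omega
      rw [he]
    have h2 : sf^[k + 2*(m+1)] a = sf^[k] a := by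
      rw [Function.iterate_add_apply, sf_iter_fullperiod]
    have h3 : ones (sf^[k] a) = ones (sf^[(k + (2*(m+1)) - 1) % (2*(m+1))] (sf a)) := by
      rw [← sf_iter_mod, h1, h2]
    rw [h3]
    exact ones_iter_le_maxones' (sf a) _ (Nat.mod_lt _ (by omega))

lemma maxones_sf_iter (a : St m) (k : ℕ) : maxones (sf^[k] a) = maxones a := by
  induction k with
  | zero => rfl
  | succ k ih => rw [Function.iterate_succ_apply', maxones_sf, ih]

lemma ones_iter_le_maxones (a : St m) (k : ℕ) : ones (sf^[k] a) ≤ maxones a := by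
  rw [sf_iter_mod]
  exact ones_iter_le_maxones' a _ (Nat.mod_lt _ (by omega))

def allones : St m := fun _ => 1

lemma ones_allones : ones (allones : St m) = m + 1 := by
  unfold ones allones
  simp

lemma maxones_allones : maxones (allones : St m) = m + 1 :=
  le_antisymm (maxones_le _) (ones_allones ▸ ones_le_maxones _)

lemma maxones_top_reach (a : St m) (h : maxones a = m + 1) :
    ∃ k < 2*(m+1), sf^[k] a = allones := by
  obtain ⟨k, hk, hone⟩ := exists_maxones a
  exact ⟨k, hk, ones_eq_top _ (by rw [hone, h])⟩

lemma flip0_flip0 (a : St m) : flip0 (flip0 a) = a := by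
  funext i
  by_cases h : i = 0
  · subst h; simp [flip0, fin2_add_add]
  · simp [flip0, Function.update_apply, h]

lemma flip0_apply_zero (a : St m) : flip0 a 0 = a 0 + 1 := by simp [flip0]

lemma flip0_apply_ne (a : St m) (i : Fin (m+1)) (h : i ≠ 0) : flip0 a i = a i := by
  simp [flip0, Function.update_apply, h]

lemma flip0_ne (a : St m) : flip0 a ≠ a := by
  intro h
  have := congrFun h 0
  rw [flip0_apply_zero] at this
  revert this
  generalize a 0 = b
  revert b; decide

/-- THE KEY LEMMA: every non-root CCR cycle has a state `b` starting with 1 such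
that flipping its first bit lands in a cycle with `maxones` exactly one bigger. -/
lemma up_edge (a : St m) (hM : maxones a ≤ m) :
    ∃ b : St m, (∃ k < 2*(m+1), sf^[k] a = b) ∧ b 0 = 1 ∧
      maxones (flip0 b) = maxones a + 1 := by
  set M := maxones a with hMdef
  obtain ⟨ks, hks, hmax⟩ := exists_maxones a
  set c := sf^[ks] a with hc
  -- complement of the max state
  have hcomp : sf^[m+1] c = flipAll c := sf_iter_halfperiod c
  have honesc : ones c = M := hmax
  have honescomp : ones (flipAll c) + M = m + 1 := by
    have := ones_flipAll c
    omega
  have hpos : 0 < ones (flipAll c) := by omega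
  obtain ⟨j, hj⟩ := ones_pos_exists _ hpos
  set b := sf^[(j : ℕ)] (flipAll c) with hb
  have hjm : (j : ℕ) < m + 1 := j.isLt
  have hb0 : b 0 = 1 := by
    rw [hb, sf_iter_zero_apply (flipAll c) j hjm]
    convert hj
  -- b is in the orbit of a
  have horb : ∃ k < 2*(m+1), sf^[k] a = b := by
    refine ⟨((j : ℕ) + (m+1) + ks) % (2*(m+1)), Nat.mod_lt _ (by omega), ?_⟩
    rw [← sf_iter_mod]
    rw [Nat.add_assoc, Function.iterate_add_apply, Function.iterate_add_apply,
      ← hc, hcomp]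
  have hmaxb : maxones b = M := by
    obtain ⟨k, _, hk⟩ := horb
    rw [← hk, maxones_sf_iter]
  -- sf^[m+1-j] b = c
  have hret : sf^[m + 1 - (j:ℕ)] b = c := by
    rw [hb, ← Function.iterate_add_apply]
    have : m + 1 - (j:ℕ) + (j:ℕ) = m + 1 := by omega
    rw [this, sf_iter_halfperiod, flipAll_flipAll]
  -- difference lemma: L1a
  have hL1a : ∀ k, 1 ≤ k → k ≤ m + 1 →
      ones (sf^[k] (flip0 b)) = ones (sf^[k] b) + 1 := by
    intro k
    induction k with
    | zero => omega
    | succ k ih =>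
      intro _ hk1
      rcases Nat.eq_or_lt_of_le (show 1 ≤ k + 1 from by omega) with h1 | h1
      · -- k + 1 = 1, base case
        have hk0 : k = 0 := by omega
        subst hk0
        have e1 := ones_sf (flip0 b)
        have e2 := ones_flip0 b
        have e3 := ones_sf b
        have hv : (b 0).val = 1 := by rw [hb0]; rfl
        have hv2 : ((flip0 b) 0).val = 0 := by
          rw [flip0_apply_zero, hb0]; rfl
        rw [hv] at e2 e3
        rw [hv2] at e1
        have hbo : 1 ≤ ones b := by
          have : (b 0).val ≤ ones b := Finset.single_le_sum
            (f := fun i => (b i).val) (fun i _ => Nat.zero_le _) (Finset.mem_univ 0)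
          omega
        rw [show (0:ℕ)+1 = 1 by norm_num, Function.iterate_one]
        omega
      · -- step case: k ≥ 1
        have hk : 1 ≤ k := by omega
        have ihk := ih hk (by omega)
        -- first bits at time k agree
        have hfb : (sf^[k] (flip0 b)) 0 = (sf^[k] b) 0 := by
          have hkm : k < m + 1 := by omega
          rw [sf_iter_zero_apply _ k hkm, sf_iter_zero_apply _ k hkm]
          apply flip0_apply_ne
          intro hcon
          have : k = 0 := by
            have := congrArg (fun x : Fin (m+1) => (x : ℕ)) hcon
            simpa using this
          omega
        have e1 := ones_sf (sf^[k] (flip0 b))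
        have e2 := ones_sf (sf^[k] b)
        rw [← Function.iterate_succ_apply' sf k (flip0 b)] at e1
        rw [← Function.iterate_succ_apply' sf k b] at e2
        rw [hfb] at e1
        simp only [Nat.succ_eq_add_one] at e1 e2
        omega
  -- L1b: second half
  have hL1b : ∀ i, 1 ≤ i → i ≤ m →
      ones (sf^[(m+1) + i] (flip0 b)) + 1 = ones (sf^[(m+1) + i] b) := by
    intro i hi1 him
    have ha : sf^[(m+1) + i] (flip0 b) = flipAll (sf^[i] (flip0 b)) := by
      rw [Function.iterate_add_apply, sf_iter_halfperiod]
    have hbb : sf^[(m+1) + i] b = flipAll (sf^[i] b) := by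
      rw [Function.iterate_add_apply, sf_iter_halfperiod]
    have f1 := ones_flipAll (sf^[i] (flip0 b))
    have f2 := ones_flipAll (sf^[i] b)
    have := hL1a i hi1 (by omega)
    rw [ha, hbb]
    omega
  -- zero case
  have hzero : ones (flip0 b) + 1 = ones b := by
    have e2 := ones_flip0 b
    have hv : (b 0).val = 1 := by rw [hb0]; rfl
    rw [hv] at e2
    omega
  have honesb_le : ∀ k, ones (sf^[k] b) ≤ M := fun k => hmaxb ▸ ones_iter_le_maxones b k
  -- upper bound
  have hub : maxones (flip0 b) ≤ M + 1 := by
    apply Finset.sup_le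
    intro k hk
    rw [Finset.mem_range] at hk
    rcases Nat.eq_zero_or_pos k with h0 | h0
    · subst h0
      simp only [Function.iterate_zero_apply]
      have := honesb_le 0
      simp only [Function.iterate_zero_apply] at this
      omega
    rcases Nat.lt_or_ge k (m+2) with hsmall | hbig
    · rw [hL1a k h0 (by omega)]
      have := honesb_le k
      omega
    · have hke : k = (m+1) + (k - (m+1)) := by omega
      rw [hke]
      have h1 := hL1b (k - (m+1)) (by omega) (by omega)
      have h2 := honesb_le ((m+1) + (k - (m+1)))
      omega
  -- lower bound witness
  have hlbw : ones (sf^[m + 1 - (j:ℕ)] (flip0 b)) = M + 1 := by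
    rw [hL1a (m + 1 - (j:ℕ)) (by omega) (by omega), hret, honesc]
  have hlb : M + 1 ≤ maxones (flip0 b) := by
    rw [← hlbw]
    exact ones_iter_le_maxones' (flip0 b) _ (by omega)
  exact ⟨b, horb, hb0, le_antisymm hub hlb⟩

end S3

section S4
variable {m : ℕ}

open scoped Classical

def SameOrbit (a b : St m) : Prop := ∃ k < 2*(m+1), sf^[k] a = b

lemma sameOrbit_refl (a : St m) : SameOrbit a a := ⟨0, by omega, rfl⟩

lemma sameOrbit_of_iter (a : St m) (k : ℕ) : SameOrbit a (sf^[k] a) :=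
  ⟨k % (2*(m+1)), Nat.mod_lt _ (by omega), (sf_iter_mod a k).symm⟩

lemma sameOrbit_trans {a b c : St m} (h1 : SameOrbit a b) (h2 : SameOrbit b c) :
    SameOrbit a c := by
  obtain ⟨k1, _, rfl⟩ := h1
  obtain ⟨k2, _, rfl⟩ := h2
  rw [← Function.iterate_add_apply]
  exact sameOrbit_of_iter a _

lemma sameOrbit_symm {a b : St m} (h : SameOrbit a b) : SameOrbit b a := by
  obtain ⟨k, hk, rfl⟩ := h
  have h2 : sf^[2*(m+1) - k] (sf^[k] a) = a := by
    rw [← Function.iterate_add_apply]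
    have he : 2*(m+1) - k + k = 2*(m+1) := by omega
    rw [he, sf_iter_fullperiod]
  exact ⟨(2*(m+1) - k) % (2*(m+1)), Nat.mod_lt _ (by omega), by
    rw [← sf_iter_mod]; exact h2⟩

lemma sameOrbit_maxones {a b : St m} (h : SameOrbit a b) : maxones a = maxones b := by
  obtain ⟨k, _, rfl⟩ := h
  exact (maxones_sf_iter a k).symm

/-- A good witness : first bit 1, and flipping moves to a cycle one higher. -/
def good (b : St m) : Prop := b 0 = 1 ∧ maxones (flip0 b) = maxones b + 1

noncomputable def witSet (a : St m) : Finset (St m) :=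
  Finset.univ.filter (fun b => SameOrbit a b ∧ good b)

lemma mem_witSet {a b : St m} : b ∈ witSet a ↔ SameOrbit a b ∧ good b := by
  unfold witSet
  simp

lemma witSet_nonempty (a : St m) (hM : maxones a ≤ m) : (witSet a).Nonempty := by
  obtain ⟨b, horb, hb0, hflip⟩ := up_edge a hM
  obtain ⟨k, hk, hkb⟩ := horb
  refine ⟨b, mem_witSet.mpr ⟨⟨k, hk, hkb⟩, hb0, ?_⟩⟩
  rw [hflip]
  congr 1
  exact sameOrbit_maxones ⟨k, hk, hkb⟩

lemma witSet_congr {a a' : St m} (h : SameOrbit a a') : witSet a = witSet a' := by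
  unfold witSet
  apply Finset.filter_congr
  intro b _
  simp only [eq_iff_iff, and_congr_left_iff]
  intro _
  constructor
  · exact fun hh => sameOrbit_trans (sameOrbit_symm h) hh
  · exact fun hh => sameOrbit_trans h hh

noncomputable instance : LinearOrder (St m) :=
  LinearOrder.lift' (Fintype.equivFin (St m)) (Equiv.injective _)

/-- Canonical witness choice for the orbit of `a`. -/
noncomputable def W (a : St m) : St m :=
  if h : (witSet a).Nonempty then (witSet a).min' h else allones

lemma W_mem (a : St m) (hM : maxones a ≤ m) : W a ∈ witSet a := by
  have h := witSet_nonempty a hM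
  rw [W, dif_pos h]
  exact Finset.min'_mem _ h

lemma W_congr {a a' : St m} (h : SameOrbit a a') : W a = W a' := by
  unfold W
  rw [witSet_congr h]

end S4

section Merge
variable {α : Type*} [Fintype α] [DecidableEq α]

open Equiv Equiv.Perm

lemma perm_minimalPeriod_pos (p : Equiv.Perm α) (u : α) :
    0 < Function.minimalPeriod (⇑p) u := by
  apply Function.IsPeriodicPt.minimalPeriod_pos (n := orderOf p)
  · exact orderOf_pos p
  · show (⇑p)^[orderOf p] u = u
    rw [Equiv.Perm.iterate_eq_pow, pow_orderOf_eq_one]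
    rfl

lemma perm_iterate_minimalPeriod (p : Equiv.Perm α) (u : α) :
    (p ^ (Function.minimalPeriod (⇑p) u)) u = u := by
  rw [← Equiv.Perm.iterate_eq_pow]
  exact Function.iterate_minimalPeriod

/-- Joining two distinct cycles with a transposition: the pair becomes same-cycle. -/
lemma merge_join (p : Equiv.Perm α) (u v : α)
    (h : ¬ p.SameCycle u v) :
    (p * Equiv.swap u v).SameCycle v u := by
  set r := Function.minimalPeriod (⇑p) u with hr
  have hrpos : 0 < r := perm_minimalPeriod_pos p u
  set q := p * Equiv.swap u v with hq
  have huv : u ≠ v := fun he => h (he ▸ Equiv.Perm.SameCycle.refl p u)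
  have key : ∀ k, k < r → (q ^ (k+1)) v = (p ^ (k+1)) u := by
    intro k
    induction k with
    | zero =>
      intro _
      simp [hq, Equiv.swap_apply_right, mul_apply]
    | succ k ih =>
      intro hk
      have hkr : k < r := by omega
      have ihv := ih hkr
      have h1 : (p ^ (k+1)) u ≠ u := by
        intro hc
        have hper : Function.IsPeriodicPt (⇑p) (k+1) u := by
          show (⇑p)^[k+1] u = u
          rw [Equiv.Perm.iterate_eq_pow]; exact hc
        have := Function.IsPeriodicPt.minimalPeriod_le (by omega) hper
        omega
      have h2 : (p ^ (k+1)) u ≠ v := by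
        intro hc
        refine h ⟨((k+1 : ℕ) : ℤ), ?_⟩
        rw [zpow_natCast]; exact hc
      calc (q ^ (k+1+1)) v = q ((q ^ (k+1)) v) := by
            rw [pow_succ', mul_apply]
        _ = q ((p ^ (k+1)) u) := by rw [ihv]
        _ = p ((p ^ (k+1)) u) := by
            rw [hq, mul_apply, Equiv.swap_apply_of_ne_of_ne h1 h2]
        _ = (p ^ (k+1+1)) u := by rw [← mul_apply, ← pow_succ']
  have hfin : (q ^ r) v = u := by
    have hh := key (r-1) (by omega)
    have he : r - 1 + 1 = r := by omega
    rw [he] at hh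
    rw [hh]
    exact perm_iterate_minimalPeriod p u
  exact ⟨(r : ℤ), by rw [zpow_natCast]; exact hfin⟩

lemma merge_step (p : Equiv.Perm α) (u v : α) (h : ¬ p.SameCycle u v) (x : α) :
    (p * Equiv.swap u v).SameCycle x (p x) := by
  set q := p * Equiv.swap u v with hq
  by_cases hxu : x = u
  · have h2 : q v = p u := by rw [hq]; simp [mul_apply]
    have h3 : q.SameCycle v (q v) := ⟨1, by simp⟩
    rw [h2] at h3
    rw [hxu]
    exact (merge_join p u v h).symm.trans h3
  by_cases hxv : x = v
  · have h2 : q u = p v := by rw [hq]; simp [mul_apply]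
    have h3 : q.SameCycle u (q u) := ⟨1, by simp⟩
    rw [h2] at h3
    rw [hxv]
    exact (merge_join p u v h).trans h3
  · have h2 : q x = p x := by
      rw [hq, mul_apply, Equiv.swap_apply_of_ne_of_ne hxu hxv]
    have h3 : q.SameCycle x (q x) := ⟨1, by simp⟩
    rw [h2] at h3
    exact h3

lemma merge_preserve_pow (p : Equiv.Perm α) (u v : α) (h : ¬ p.SameCycle u v) (x : α) :
    ∀ i : ℕ, (p * Equiv.swap u v).SameCycle x ((p ^ i) x) := by
  intro i
  induction i with
  | zero => exact Equiv.Perm.SameCycle.refl _ _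
  | succ i ih =>
    have step := merge_step p u v h ((p ^ i) x)
    rw [pow_succ', mul_apply]
    exact ih.trans step

lemma merge_preserve (p : Equiv.Perm α) (u v : α) (h : ¬ p.SameCycle u v) {x y : α}
    (hxy : p.SameCycle x y) : (p * Equiv.swap u v).SameCycle x y := by
  obtain ⟨i, _, rfl⟩ := hxy.exists_pow_eq'
  exact merge_preserve_pow p u v h x i

end Merge

section S6
variable {m : ℕ}

open scoped Classical
open Equiv

lemma sf_injective : Function.Injective (sf : St m → St m) := by
  intro a b h
  have h0 : a 0 = b 0 := by
    have hh := congrFun h ⟨m, by omega⟩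
    rw [sf_apply_last a, sf_apply_last b] at hh
    exact add_right_cancel hh
  funext i
  rcases i with ⟨i, hi⟩
  rcases Nat.eq_zero_or_pos i with hz | hpos
  · subst hz
    exact h0
  · have hh := congrFun h ⟨i-1, by omega⟩
    rw [sf_apply_lt a (i-1) (by omega), sf_apply_lt b (i-1) (by omega)] at hh
    have e1 : a ⟨i, hi⟩ = a ⟨i-1+1, by omega⟩ := idx_congr a _ _ (by omega)
    have e2 : b ⟨i-1+1, by omega⟩ = b ⟨i, hi⟩ := idx_congr b _ _ (by omega)
    rw [e1, hh, e2]

noncomputable def sigmaPerm : Equiv.Perm (St m) :=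
  Equiv.ofBijective sf (Finite.injective_iff_bijective.mp sf_injective)

lemma sigmaPerm_apply (a : St m) : (sigmaPerm : Equiv.Perm (St m)) a = sf a := rfl

lemma sigmaPerm_pow (k : ℕ) (a : St m) :
    ((sigmaPerm : Equiv.Perm (St m)) ^ k) a = sf^[k] a := by
  induction k with
  | zero => rfl
  | succ k ih => rw [pow_succ', Equiv.Perm.mul_apply, ih, sigmaPerm_apply,
      ← Function.iterate_succ_apply' sf k a]

lemma sameCycle_of_pow {p : Equiv.Perm (St m)} {x y : St m} {k : ℕ}
    (h : (p ^ k) x = y) : p.SameCycle x y :=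
  ⟨(k : ℤ), by rw [zpow_natCast]; exact h⟩

noncomputable def witFinset : Finset (St m) :=
  Finset.univ.filter (fun b => maxones b ≤ m ∧ W b = b)

lemma mem_witFinset {b : St m} : b ∈ witFinset ↔ maxones b ≤ m ∧ W b = b := by
  unfold witFinset; simp

lemma wit_good {b : St m} (hb : b ∈ witFinset) : good b := by
  rw [mem_witFinset] at hb
  have := W_mem b hb.1
  rw [hb.2, mem_witSet] at this
  exact this.2

lemma wit_bit0 {b : St m} (hb : b ∈ witFinset) : b 0 = 1 := (wit_good hb).1

lemma W_full (x : St m) (h : maxones x ≤ m) :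
    W x ∈ witFinset ∧ SameOrbit x (W x) ∧ good (W x) := by
  have hw := W_mem x h
  rw [mem_witSet] at hw
  refine ⟨?_, hw.1, hw.2⟩
  rw [mem_witFinset]
  constructor
  · rw [← sameOrbit_maxones hw.1]; exact h
  · exact (W_congr hw.1).symm

noncomputable def tau (b : St m) : Equiv.Perm (St m) :=
  if maxones b ≤ m ∧ W b = b then Equiv.swap b (flip0 b) else 1

lemma tau_of_wit {b : St m} (hb : b ∈ witFinset) : tau b = Equiv.swap b (flip0 b) := by
  rw [mem_witFinset] at hb
  rw [tau, if_pos hb]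

lemma tau_of_not {b : St m} (hb : ¬(maxones b ≤ m ∧ W b = b)) : tau b = 1 := by
  rw [tau, if_neg hb]

lemma flip0_inj {a b : St m} (h : flip0 a = flip0 b) : a = b := by
  rw [← flip0_flip0 a, h, flip0_flip0]

lemma pair_disjoint {a b : St m} (ha : a ∈ witFinset) (hb : b ∈ witFinset) (hne : a ≠ b) :
    ∀ x : St m, Equiv.swap a (flip0 a) x = x ∨ Equiv.swap b (flip0 b) x = x := by
  intro x
  by_cases h1 : x = a ∨ x = flip0 a
  · right
    have hxb : x ≠ b := by
      rcases h1 with rfl | rfl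
      · exact hne
      · intro hc
        have := wit_bit0 hb
        rw [← hc, flip0_apply_zero, wit_bit0 ha] at this
        exact absurd this (by decide)
    have hxfb : x ≠ flip0 b := by
      rcases h1 with rfl | rfl
      · intro hc
        have := congrFun hc 0
        rw [flip0_apply_zero, wit_bit0 ha, wit_bit0 hb] at this
        exact absurd this (by decide)
      · intro hc
        exact hne (flip0_inj hc)
    exact Equiv.swap_apply_of_ne_of_ne hxb hxfb
  · left
    push_neg at h1
    exact Equiv.swap_apply_of_ne_of_ne h1.1 h1.2

lemma tau_commute (a b : St m) : Commute (tau a) (tau b) := by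
  by_cases ha : maxones a ≤ m ∧ W a = a
  · by_cases hb : maxones b ≤ m ∧ W b = b
    · by_cases hab : a = b
      · subst hab; exact Commute.refl _
      · have ha' : a ∈ witFinset := mem_witFinset.mpr ha
        have hb' : b ∈ witFinset := mem_witFinset.mpr hb
        rw [tau_of_wit ha', tau_of_wit hb']
        have hd : Equiv.Perm.Disjoint (Equiv.swap a (flip0 a)) (Equiv.swap b (flip0 b)) :=
          pair_disjoint ha' hb' hab
        exact hd.commute
    · rw [tau_of_not hb]; exact Commute.one_right _
  · rw [tau_of_not ha]; exact Commute.one_left _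

noncomputable def swProd (S : Finset (St m)) : Equiv.Perm (St m) :=
  S.noncommProd tau (fun a _ b _ _ => tau_commute a b)

noncomputable def Pperm (S : Finset (St m)) : Equiv.Perm (St m) :=
  sigmaPerm * swProd S

lemma swProd_empty : swProd (∅ : Finset (St m)) = 1 := Finset.noncommProd_empty _ _

lemma swProd_insert (S : Finset (St m)) (u : St m) (hu : u ∉ S) :
    swProd (insert u S) = swProd S * tau u := by
  unfold swProd
  exact Finset.noncommProd_insert_of_notMem' _ _ _ _ hu

lemma tau_pair (u : St m) : ∀ y : St m, tau u y = y ∨ tau u y = flip0 y := by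
  intro y
  by_cases hc : maxones u ≤ m ∧ W u = u
  · rw [tau, if_pos hc]
    by_cases h1 : y = u
    · subst h1; right; rw [Equiv.swap_apply_left]
    by_cases h2 : y = flip0 u
    · subst h2; right; rw [Equiv.swap_apply_right, flip0_flip0]
    · left; exact Equiv.swap_apply_of_ne_of_ne h1 h2
  · rw [tau, if_neg hc]; left; rfl

/-- the product of pair swaps maps each point into its pair -/
lemma swProd_pair (S : Finset (St m)) :
    ∀ a : St m, swProd S a = a ∨ swProd S a = flip0 a := by
  induction S using Finset.induction_on with
  | empty => intro a; left; rw [swProd_empty]; rfl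
  | @insert u S' hu ih =>
    intro a
    rw [swProd_insert S' u hu, Equiv.Perm.mul_apply]
    rcases tau_pair u a with h | h
    · rw [h]; exact ih a
    · rw [h]
      rcases ih (flip0 a) with h2 | h2
      · right; rw [h2]
      · left; rw [h2, flip0_flip0]

end S6

section S7
variable {m : ℕ}

open scoped Classical
open Equiv

lemma fin2_one_ne_zero : (1 : Fin 2) ≠ 0 := by decide

/-- off the pairs of S, swProd is the identity -/
lemma swProd_off (S : Finset (St m)) :
    ∀ a : St m, (∀ b ∈ S, a ≠ b ∧ a ≠ flip0 b) → swProd S a = a := by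
  induction S using Finset.induction_on with
  | empty => intro a _; rw [swProd_empty]; rfl
  | @insert u S' hu ih =>
    intro a ha
    rw [swProd_insert S' u hu, Equiv.Perm.mul_apply]
    have hau := ha u (Finset.mem_insert_self u S')
    have htau : tau u a = a := by
      by_cases hc : maxones u ≤ m ∧ W u = u
      · rw [tau, if_pos hc]
        exact Equiv.swap_apply_of_ne_of_ne hau.1 hau.2
      · rw [tau_of_not hc]; rfl
    rw [htau]
    exact ih a (fun b hb => ha b (Finset.mem_insert_of_mem hb))

lemma wit_ne_flip {b c : St m} (hb : b ∈ witFinset) (hc : c ∈ witFinset) :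
    b ≠ flip0 c := by
  intro h
  have h1 := wit_bit0 hb
  rw [h, flip0_apply_zero, wit_bit0 hc] at h1
  exact absurd h1 (by decide)

/-- on a pair of S (S ⊆ witFinset), swProd swaps the pair -/
lemma swProd_on (S : Finset (St m)) (hS : S ⊆ witFinset) :
    ∀ b ∈ S, swProd S b = flip0 b ∧ swProd S (flip0 b) = b := by
  induction S using Finset.induction_on with
  | empty => intro b hb; exact absurd hb (Finset.notMem_empty b)
  | @insert u S' hu ih =>
    intro b hb
    have hS' : S' ⊆ witFinset := fun x hx => hS (Finset.mem_insert_of_mem hx)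
    have hwu : u ∈ witFinset := hS (Finset.mem_insert_self u S')
    rw [swProd_insert S' u hu]
    rcases Finset.mem_insert.mp hb with rfl | hb'
    · constructor
      · rw [Equiv.Perm.mul_apply, tau_of_wit hwu, Equiv.swap_apply_left]
        apply swProd_off
        intro c hc
        refine ⟨?_, ?_⟩
        · intro hcon
          have h1 := flip0_apply_zero b
          rw [hcon, wit_bit0 (hS' hc), wit_bit0 hwu] at h1
          exact absurd h1 (by decide)
        · intro hcon
          exact hu ((flip0_inj hcon) ▸ hc)
      · rw [Equiv.Perm.mul_apply, tau_of_wit hwu, Equiv.swap_apply_right]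
        apply swProd_off
        intro c hc
        refine ⟨(fun hcon => hu (hcon ▸ hc)), fun hcon => ?_⟩
        exact wit_ne_flip hwu (hS' hc) hcon
    · have hbw : b ∈ witFinset := hS' hb'
      have hbu : b ≠ u := fun h => hu (h ▸ hb')
      constructor
      · rw [Equiv.Perm.mul_apply, tau_of_wit hwu,
          Equiv.swap_apply_of_ne_of_ne hbu (wit_ne_flip hbw hwu)]
        exact (ih hS' b hb').1
      · rw [Equiv.Perm.mul_apply, tau_of_wit hwu,
          Equiv.swap_apply_of_ne_of_ne (fun h => (wit_ne_flip hwu hbw) h.symm)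
            (fun h => hbu (flip0_inj h))]
        exact (ih hS' b hb').2

lemma Pperm_apply (S : Finset (St m)) (a : St m) : Pperm S a = sf (swProd S a) := rfl

/-- If x's orbit carries no pair from S, Pperm S acts like sf, iterated. -/
lemma Pperm_iter_off (S : Finset (St m))
    (x : St m) (hnb : ∀ b ∈ S, ¬ SameOrbit x b)
    (hnf : ∀ b ∈ S, ¬ SameOrbit x (flip0 b))
    (j : ℕ) : ((Pperm S) ^ j) x = sf^[j] x := by
  induction j with
  | zero => rfl
  | succ j ih =>
    rw [pow_succ', Equiv.Perm.mul_apply, ih, Function.iterate_succ_apply']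
    set y := sf^[j] x with hy
    have hxy : SameOrbit x y := sameOrbit_of_iter x j
    have hoff : (swProd S) y = y := by
      apply swProd_off
      intro b hb
      exact ⟨fun hcon => hnb b hb (hcon ▸ hxy), fun hcon => hnf b hb (hcon ▸ hxy)⟩
    rw [Pperm_apply, hoff]

end S7

section S8
variable {m : ℕ}

open scoped Classical
open Equiv

lemma big : ∀ S : Finset (St m), S ⊆ witFinset →
    (∀ b ∈ witFinset, ∀ c ∈ S, maxones c < maxones b → b ∈ S) →
    ∀ x : St m, (maxones x = m + 1 ∨ ∃ b ∈ S, SameOrbit x b) →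
      (Pperm S).SameCycle x allones := by
  intro S
  induction S using Finset.strongInduction with
  | _ S ih =>
    intro hS hInv x hx
    rcases S.eq_empty_or_nonempty with rfl | hne
    · -- base case: S = ∅
      have hroot : maxones x = m + 1 := by
        rcases hx with h | ⟨b, hb, _⟩
        · exact h
        · exact absurd hb (Finset.notMem_empty b)
      obtain ⟨k, _, hk⟩ := maxones_top_reach x hroot
      have hp : Pperm (∅ : Finset (St m)) = sigmaPerm := by
        rw [Pperm, swProd_empty, mul_one]
      rw [hp]
      exact sameCycle_of_pow (by rw [sigmaPerm_pow]; exact hk)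
    · -- inductive step
      obtain ⟨u, huS, humin⟩ := S.exists_min_image (fun b => maxones b) hne
      have huw : u ∈ witFinset := hS huS
      have hugood : good u := wit_good huw
      have humax : maxones u ≤ m := (mem_witFinset.mp huw).1
      have hvmax : maxones (flip0 u) = maxones u + 1 := hugood.2
      set v := flip0 u with hv
      set S' := S.erase u with hS'def
      have hsub : S' ⊂ S := Finset.erase_ssubset huS
      have hS'w : S' ⊆ witFinset := fun b hb => hS (Finset.mem_of_mem_erase hb)
      have hInv' : ∀ b ∈ witFinset, ∀ c ∈ S', maxones c < maxones b → b ∈ S' := by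
        intro b hb c hc hlt
        have hcS : c ∈ S := Finset.mem_of_mem_erase hc
        have hbS : b ∈ S := hInv b hb c hcS hlt
        rw [Finset.mem_erase]
        refine ⟨?_, hbS⟩
        intro hbu
        subst hbu
        have := humin c hcS
        omega
      have ihS' := ih S' hsub hS'w hInv'
      have hP : Pperm S = Pperm S' * Equiv.swap u v := by
        have hins : S = insert u S' := (Finset.insert_erase huS).symm
        rw [hins]
        show sigmaPerm * swProd (insert u S') = _
        rw [swProd_insert _ _ (Finset.notMem_erase u S), tau_of_wit huw, ← mul_assoc]
        rfl
      have hnb : ∀ b ∈ S', ¬ SameOrbit u b := by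
        intro b hb hso
        have h1 := (mem_witFinset.mp huw).2
        have h2 := (mem_witFinset.mp (hS'w hb)).2
        have h3 := W_congr hso
        rw [h1, h2] at h3
        exact (Finset.mem_erase.mp hb).1 h3.symm
      have hnf : ∀ b ∈ S', ¬ SameOrbit u (flip0 b) := by
        intro b hb hso
        have hbgood := wit_good (hS'w hb)
        have he1 := sameOrbit_maxones hso
        rw [hbgood.2] at he1
        have he2 := humin b (Finset.mem_of_mem_erase hb)
        omega
      have hNS : ¬ (Pperm S').SameCycle u v := by
        intro hsc
        obtain ⟨i, _, hi⟩ := hsc.exists_pow_eq'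
        rw [Pperm_iter_off S' u hnb hnf i] at hi
        have hmv : maxones v = maxones u := by rw [← hi, maxones_sf_iter]
        omega
      have hvgoal : (Pperm S').SameCycle v allones := by
        rcases Nat.lt_or_ge (maxones v) (m+1) with hlt | hge
        · have hvm : maxones v ≤ m := by omega
          obtain ⟨hwv, hso, _⟩ := W_full v hvm
          have hWvS : W v ∈ S := by
            apply hInv (W v) hwv u huS
            rw [← sameOrbit_maxones hso]
            omega
          have hWvS' : W v ∈ S' := by
            rw [Finset.mem_erase]
            refine ⟨?_, hWvS⟩
            intro hc
            have := sameOrbit_maxones hso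
            rw [hc] at this
            omega
          exact ihS' v (Or.inr ⟨W v, hWvS', hso⟩)
        · have : maxones v = m + 1 := le_antisymm (maxones_le v) hge
          exact ihS' v (Or.inl this)
      rw [hP]
      rcases hx with hroot | ⟨b, hbS, hso⟩
      · exact merge_preserve _ u v hNS (ihS' x (Or.inl hroot))
      · by_cases hbu : b = u
        · subst hbu
          -- x is in u's orbit
          obtain ⟨k2, _, hk2⟩ := sameOrbit_symm hso
          have h1 : (Pperm S').SameCycle b x :=
            sameCycle_of_pow (by rw [Pperm_iter_off S' b hnb hnf k2]; exact hk2)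
          have h2 := merge_preserve _ b v hNS h1
          have h3 := merge_join (Pperm S') b v hNS
          have h4 := merge_preserve _ b v hNS hvgoal
          exact h2.symm.trans (h3.symm.trans h4)
        · have hbS' : b ∈ S' := Finset.mem_erase.mpr ⟨hbu, hbS⟩
          exact merge_preserve _ u v hNS (ihS' x (Or.inr ⟨b, hbS', hso⟩))

/-- the final permutation -/
noncomputable def piPerm : Equiv.Perm (St m) := Pperm witFinset

lemma piPerm_connected : ∀ x : St m, (piPerm).SameCycle x (allones : St m) := by
  intro x
  apply big witFinset (le_refl _) (fun b hb c _ _ => hb)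
  rcases Nat.lt_or_ge (maxones x) (m+1) with hlt | hge
  · obtain ⟨hwv, hso, _⟩ := W_full x (by omega)
    exact Or.inr ⟨W x, hwv, hso⟩
  · exact Or.inl (le_antisymm (maxones_le x) hge)

end S8

section S9
variable {m : ℕ}

open scoped Classical
open Equiv

lemma card_St : Fintype.card (St m) = 2^(m+1) := by
  rw [Fintype.card_fun]
  simp

noncomputable def rp (m : ℕ) : ℕ := Function.minimalPeriod (⇑(piPerm : Equiv.Perm (St m))) allones

lemma rp_pos : 0 < rp m := perm_minimalPeriod_pos _ _

lemma piPerm_pow_rp (q : ℕ) : ((piPerm : Equiv.Perm (St m)) ^ (rp m * q)) allones = allones := by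
  induction q with
  | zero => rfl
  | succ q ih =>
    have hr : ((piPerm : Equiv.Perm (St m)) ^ rp m) allones = allones := by
      rw [← Equiv.Perm.iterate_eq_pow]
      exact Function.iterate_minimalPeriod
    rw [Nat.mul_succ, pow_add, Equiv.Perm.mul_apply, hr, ih]

lemma piPerm_surj_aux : ∀ x : St m, ∃ j < rp m, ((piPerm : Equiv.Perm (St m)) ^ j) allones = x := by
  intro x
  obtain ⟨i, _, hi⟩ := (piPerm_connected x).symm.exists_pow_eq'
  refine ⟨i % rp m, Nat.mod_lt _ rp_pos, ?_⟩
  have h0 : i = i % rp m + rp m * (i / rp m) := by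
    have := Nat.div_add_mod i (rp m)
    omega
  rw [h0, pow_add, Equiv.Perm.mul_apply, piPerm_pow_rp] at hi
  exact hi

lemma piPerm_inj_aux : ∀ j1 < rp m, ∀ j2 < rp m,
    ((piPerm : Equiv.Perm (St m)) ^ j1) allones = (piPerm ^ j2) allones → j1 = j2 := by
  intro j1 h1 j2 h2 he
  have key := Function.iterate_injOn_Iio_minimalPeriod (f := ⇑(piPerm : Equiv.Perm (St m)))
    (x := allones) (Set.mem_Iio.mpr h1) (Set.mem_Iio.mpr h2)
  exact key he

lemma rp_eq : rp m = 2^(m+1) := by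
  have hbij : Function.Bijective (fun j : Fin (rp m) => ((piPerm : Equiv.Perm (St m)) ^ (j : ℕ)) allones) := by
    constructor
    · intro j1 j2 h
      exact Fin.ext (piPerm_inj_aux _ j1.isLt _ j2.isLt h)
    · intro x
      obtain ⟨j, hj, hjx⟩ := piPerm_surj_aux x
      exact ⟨⟨j, hj⟩, hjx⟩
  have := Fintype.card_of_bijective hbij
  rw [Fintype.card_fin, card_St] at this
  exact this

noncomputable def seq (m : ℕ) (k : ℕ) : St m := ((piPerm : Equiv.Perm (St m)) ^ k) allones

lemma seq_mod (k : ℕ) : seq m k = seq m (k % 2^(m+1)) := by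
  unfold seq
  have h2 : ((piPerm : Equiv.Perm (St m)) ^ (2^(m+1) * (k / 2^(m+1)))) allones = allones := by
    rw [← rp_eq]
    exact piPerm_pow_rp _
  conv_lhs => rw [show k = k % 2^(m+1) + 2^(m+1) * (k / 2^(m+1)) by
    have := Nat.div_add_mod k (2^(m+1)); omega]
  rw [pow_add, Equiv.Perm.mul_apply, h2]

lemma seq_succ (k : ℕ) : seq m (k+1) = piPerm (seq m k) := by
  unfold seq
  rw [pow_succ', Equiv.Perm.mul_apply]

lemma piPerm_shift (a : St m) (i : ℕ) (hi : i < m) :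
    (piPerm a) ⟨i, by omega⟩ = a ⟨i+1, by omega⟩ := by
  have hpa : piPerm a = sf (swProd witFinset a) := rfl
  rw [hpa, sf_apply_lt _ i (by omega) (by omega)]
  rcases swProd_pair witFinset a with h | h
  · rw [h]
  · rw [h]
    apply flip0_apply_ne
    intro hc
    have := congrArg (fun x : Fin (m+1) => (x : ℕ)) hc
    simp at this

lemma seq_window : ∀ i, ∀ _hi : i ≤ m, ∀ p, seq m p ⟨i, by omega⟩ = seq m (p + i) 0 := by
  intro i
  induction i with
  | zero => intro _ p; rfl
  | succ i ih =>
    intro hi p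
    have h1 : seq m (p+1) ⟨i, by omega⟩ = seq m p ⟨i+1, by omega⟩ := by
      rw [seq_succ]
      exact piPerm_shift (seq m p) i (by omega)
    rw [← h1, ih (by omega) (p+1)]
    congr 1
    omega

/-- the three-way case analysis for a single step of piPerm -/
lemma piPerm_cases (a : St m) :
    piPerm a = sf a
    ∨ (a ∈ witFinset ∧ piPerm a = sf (flip0 a))
    ∨ ((flip0 a) ∈ witFinset ∧ piPerm a = sf (flip0 a)) := by
  by_cases h1 : a ∈ witFinset
  · right; left
    refine ⟨h1, ?_⟩
    show sf (swProd witFinset a) = _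
    rw [(swProd_on witFinset (le_refl _) a h1).1]
  by_cases h2 : flip0 a ∈ witFinset
  · right; right
    refine ⟨h2, ?_⟩
    show sf (swProd witFinset a) = _
    have := (swProd_on witFinset (le_refl _) (flip0 a) h2).2
    rw [flip0_flip0] at this
    rw [this]
  · left
    show sf (swProd witFinset a) = _
    have hoff : swProd witFinset a = a := by
      apply swProd_off
      intro b hb
      refine ⟨fun hc => h1 (hc ▸ hb), fun hc => h2 ?_⟩
      rw [hc, flip0_flip0]
      exact hb
    rw [hoff]

noncomputable def Fh (a : St m) : ℤ := (maxones a : ℤ) - (ones a : ℤ)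

lemma Fh_nonneg (a : St m) : 0 ≤ Fh a := by
  have := ones_le_maxones a
  unfold Fh
  omega

lemma Fh_le (a : St m) : Fh a ≤ m + 1 := by
  have := maxones_le a
  unfold Fh
  omega

lemma Fh_allones : Fh (allones : St m) = 0 := by
  unfold Fh
  rw [maxones_allones, ones_allones]
  omega

lemma fin2_val_cases (b : Fin 2) : (b.val = 0 ∧ b = 0) ∨ (b.val = 1 ∧ b = 1) := by
  revert b; decide

lemma Fh_step (a : St m) : Fh (piPerm a) = Fh a + 2 * ((a 0).val : ℤ) - 1 := by
  rcases piPerm_cases a with h | ⟨hw, h⟩ | ⟨hw, h⟩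
  · rw [h]
    have h1 := ones_sf a
    have h2 := maxones_sf a
    unfold Fh
    rw [h2]
    have hcast : (ones (sf a) : ℤ) + 2 * ((a 0).val : ℤ) = (ones a : ℤ) + 1 := by
      exact_mod_cast congrArg (fun n : ℕ => (n : ℤ)) h1
    omega
  · -- a is a witness: a 0 = 1, flip up
    have hg := wit_good hw
    have ha0 : (a 0).val = 1 := by rw [hg.1]; rfl
    have hmx : maxones (flip0 a) = maxones a + 1 := hg.2
    rw [h]
    have h1 := ones_sf (flip0 a)
    have h2 := maxones_sf (flip0 a)
    have h3 := ones_flip0 a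
    have hf0 : ((flip0 a) 0).val = 0 := by
      rw [flip0_apply_zero, hg.1]; rfl
    rw [hf0] at h1
    rw [ha0] at h3
    unfold Fh
    rw [h2, hmx, ha0]
    have hc1 : (ones (sf (flip0 a)) : ℤ) = (ones (flip0 a) : ℤ) + 1 := by
      exact_mod_cast congrArg (fun n : ℕ => (n : ℤ)) (by omega : ones (sf (flip0 a)) = ones (flip0 a) + 1)
    have hc2 : (ones (flip0 a) : ℤ) + 2 = (ones a : ℤ) + 1 := by
      exact_mod_cast congrArg (fun n : ℕ => (n : ℤ)) (by omega : ones (flip0 a) + 2 = ones a + 1)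
    omega
  · -- flip0 a is a witness: a 0 = 0, flip down
    have hg := wit_good hw
    have hb0 : (flip0 a) 0 = 1 := hg.1
    have ha0 : (a 0).val = 0 := by
      rcases fin2_val_cases (a 0) with ⟨hv, _⟩ | ⟨hv, he⟩
      · exact hv
      · exfalso
        have := flip0_apply_zero a
        rw [hb0, he] at this
        exact absurd this (by decide)
    have hmx : maxones a = maxones (flip0 a) + 1 := by
      have := hg.2
      rw [flip0_flip0] at this
      exact this
    rw [h]
    have h1 := ones_sf (flip0 a)
    have h3 := ones_flip0 a
    have hf0 : ((flip0 a) 0).val = 1 := by rw [hb0]; rfl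
    rw [hf0] at h1
    rw [ha0] at h3
    have h2 := maxones_sf (flip0 a)
    unfold Fh
    rw [h2, ha0]
    have hones1 : ones (sf (flip0 a)) + 2 = ones (flip0 a) + 1 := h1
    have hones2 : ones (flip0 a) = ones a + 1 := by omega
    have hc1 : (ones (sf (flip0 a)) : ℤ) + 2 = (ones (flip0 a) : ℤ) + 1 := by
      exact_mod_cast congrArg (fun n : ℕ => (n : ℤ)) hones1
    have hc2 : (ones (flip0 a) : ℤ) = (ones a : ℤ) + 1 := by
      exact_mod_cast congrArg (fun n : ℕ => (n : ℤ)) hones2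
    omega

end S9

section S10
variable {m : ℕ}

open scoped Classical

noncomputable def wseq (m : ℕ) : Fin (2^(m+1)) → Fin 2 := fun k => seq m k.val 0

lemma wseq_window (p : ℕ) (i : ℕ) (hi : i ≤ m) (h : (p+i) % 2^(m+1) < 2^(m+1)) :
    wseq m ⟨(p+i) % 2^(m+1), h⟩ = seq m p ⟨i, by omega⟩ := by
  show seq m ((p+i) % 2^(m+1)) 0 = _
  rw [← seq_mod, ← seq_window i hi p]

lemma seq_lt_rp_inj {j1 j2 : ℕ} (h1 : j1 < 2^(m+1)) (h2 : j2 < 2^(m+1))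
    (h : seq m j1 = seq m j2) : j1 = j2 := by
  apply piPerm_inj_aux j1 (by rw [rp_eq]; exact h1) j2 (by rw [rp_eq]; exact h2)
  exact h

lemma count_diff (L : ℕ) (f : ℕ → Fin 2) :
    (((Finset.range L).filter (fun i => f i = 1)).card : ℤ)
      - (((Finset.range L).filter (fun i => f i = 0)).card : ℤ)
      = ∑ i ∈ Finset.range L, (2 * ((f i).val : ℤ) - 1) := by
  induction L with
  | zero => simp
  | succ L ih =>
    rw [Finset.sum_range_succ, ← ih, Finset.range_add_one, Finset.filter_insert,
      Finset.filter_insert]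
    have hnm1 : L ∉ (Finset.range L).filter (fun i => f i = 1) :=
      fun hc => absurd (Finset.mem_range.mp (Finset.mem_of_mem_filter L hc)) (by omega)
    have hnm0 : L ∉ (Finset.range L).filter (fun i => f i = 0) :=
      fun hc => absurd (Finset.mem_range.mp (Finset.mem_of_mem_filter L hc)) (by omega)
    rcases fin2_val_cases (f L) with ⟨hv, he⟩ | ⟨hv, he⟩
    · rw [if_neg (by rw [he]; decide), if_pos he, Finset.card_insert_of_notMem hnm0, hv]
      push_cast
      ring
    · rw [if_pos he, if_neg (by rw [he]; decide), Finset.card_insert_of_notMem hnm1, hv]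
      push_cast
      ring

lemma telescope (p : ℕ) (L : ℕ) :
    ∑ i ∈ Finset.range L, (2 * (((seq m (p+i)) 0).val : ℤ) - 1)
      = Fh (seq m (p+L)) - Fh (seq m p) := by
  induction L with
  | zero => simp
  | succ L ih =>
    rw [Finset.sum_range_succ, ih]
    have hstep : Fh (seq m (p+L+1)) = Fh (seq m (p+L)) + 2 * (((seq m (p+L)) 0).val : ℤ) - 1 := by
      rw [seq_succ]
      exact Fh_step _
    have he : p + (L+1) = p + L + 1 := by omega
    rw [he, hstep]
    ring

end S10

section S11
variable {m : ℕ}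

open scoped Classical

lemma wseq_isDeBruijn (hN : 0 < 2^(m+1)) : isDeBruijn (b := 2) hN (wseq m) := by
  intro u
  obtain ⟨j, hj, hju⟩ := piPerm_surj_aux (u : St m)
  rw [rp_eq] at hj
  have hjseq : seq m j = u := hju
  refine ⟨⟨j, hj⟩, ?_, ?_⟩
  · intro i
    show wseq m ⟨(j + i.val) % 2^(m+1), Nat.mod_lt _ hN⟩ = u i
    rw [wseq_window (m := m) j i.val (by omega) (Nat.mod_lt _ hN), hjseq]
  · intro p' hp'
    apply Fin.ext
    apply seq_lt_rp_inj p'.isLt hj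
    rw [hjseq]
    funext i
    have hpi := hp' i
    rw [show ((⟨(p'.val + i.val) % 2^(m+1), Nat.mod_lt _ hN⟩ : Fin (2^(m+1))))
        = ⟨(p'.val + i.val) % 2^(m+1), Nat.mod_lt _ hN⟩ from rfl] at hpi
    rw [wseq_window (m := m) p'.val i.val (by omega) (Nat.mod_lt _ hN)] at hpi
    exact hpi

lemma wseq_disc_le (hN : 0 < 2^(m+1)) : disc hN (wseq m) ≤ m + 1 := by
  unfold disc
  apply Finset.sup_le
  rintro ⟨p, L⟩ _
  show ((cnt hN (wseq m) 1 p L : ℤ) - (cnt hN (wseq m) 0 p L : ℤ)).natAbs ≤ m + 1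
  have hf : ∀ i : ℕ, wseq m ⟨(p + i) % 2^(m+1), Nat.mod_lt _ hN⟩ = seq m (p+i) 0 := by
    intro i
    show seq m ((p+i) % 2^(m+1)) 0 = _
    rw [← seq_mod]
  have hcnt : (cnt hN (wseq m) 1 p L : ℤ) - (cnt hN (wseq m) 0 p L : ℤ)
      = Fh (seq m (p+L)) - Fh (seq m p) := by
    unfold cnt
    rw [count_diff L (fun i => wseq m ⟨(p + i) % 2^(m+1), Nat.mod_lt _ hN⟩)]
    rw [Finset.sum_congr rfl (fun i _ => by rw [hf i])]
    exact telescope p L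
  rw [hcnt]
  have b1 := Fh_nonneg (seq m (p+L))
  have b2 := Fh_le (seq m (p+L))
  have b3 := Fh_nonneg (seq m p)
  have b4 := Fh_le (seq m p)
  omega

end S11

end DBmin

theorem stmt18 (n : ℕ) (hn : 1 ≤ n) (hN : 0 < 2 ^ n) :
    (∃ w : Fin (2 ^ n) → Fin 2, isDeBruijn (b := 2) hN w ∧ disc hN w = n) ∧
    (∀ w : Fin (2 ^ n) → Fin 2, isDeBruijn (b := 2) hN w → n ≤ disc hN w) := by
  have lower : ∀ w : Fin (2 ^ n) → Fin 2, isDeBruijn (b := 2) hN w → n ≤ disc hN w := by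
    intro w hdb
    obtain ⟨p, hp, _⟩ := hdb (fun _ => 1)
    have hc1 : cnt hN w 1 p.val n = n := by
      unfold cnt
      rw [Finset.filter_true_of_mem, Finset.card_range]
      intro i hi
      rw [Finset.mem_range] at hi
      exact hp ⟨i, hi⟩
    have hc0 : cnt hN w 0 p.val n = 0 := by
      unfold cnt
      rw [Finset.filter_false_of_mem, Finset.card_empty]
      intro i hi
      rw [Finset.mem_range] at hi
      have h1 := hp ⟨i, hi⟩
      rw [h1]
      decide
    have hmem : (p.val, n) ∈ Finset.range (2^n) ×ˢ Finset.range (2^n + 1) := by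
      rw [Finset.mem_product, Finset.mem_range, Finset.mem_range]
      exact ⟨p.isLt, by have := Nat.lt_two_pow_self (n := n); omega⟩
    have hle := Finset.le_sup (f := fun q : ℕ × ℕ =>
      ((cnt hN w 1 q.1 q.2 : ℤ) - (cnt hN w 0 q.1 q.2 : ℤ)).natAbs) hmem
    unfold disc
    calc n = (((cnt hN w 1 p.val n : ℤ) - (cnt hN w 0 p.val n : ℤ)).natAbs) := by
          rw [hc1, hc0]; simp
      _ ≤ _ := hle
  refine ⟨?_, lower⟩
  obtain ⟨m, rfl⟩ : ∃ m, n = m + 1 := ⟨n - 1, by omega⟩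
  refine ⟨DBmin.wseq m, DBmin.wseq_isDeBruijn hN, ?_⟩
  exact le_antisymm (DBmin.wseq_disc_le hN)
    (lower (DBmin.wseq m) (DBmin.wseq_isDeBruijn hN))
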